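/- Let c > 0 and φ(x) = exp(c(x−1)). Then φ'' is log-concave on (0,1), and the first local extremum x₀ of M(x) = c·x·x̄ + φ(1−x) + φ(1−x̄) − 1 (where x̄ = φ'(1−x)/φ'(1) = e^{−cx}) is a global maximum of M on [0,1]. Moreover, with q the smallest solution in (0,1) of q = exp(−c·exp(−cq)), the maximum value equals q + e^{−cq} + cq·e^{−cq} − 1. -/

import Mathlib

open Real Set

namespace Poisson19

/-- The function `M` in a normalized form. -/
noncomputable def Mc (c : ℝ) : ℝ → ℝ := fun x =>
  c * x * Real.exp (-(c * x)) + Real.exp (-(c * x)) +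
    Real.exp (-(c * Real.exp (-(c * x)))) - 1

lemma hasDerivAt_psi (c x : ℝ) :
    HasDerivAt (fun y => Real.exp (-(c * y))) (-c * Real.exp (-(c * x))) x := by
  have h := (((hasDerivAt_id x).const_mul c).neg).exp
  simp only [id_eq, Pi.neg_apply] at h
  convert h using 1
  ring

lemma hasDerivAt_g (c x : ℝ) :
    HasDerivAt (fun y => Real.exp (-(c * Real.exp (-(c * y)))) - y)
      (c ^ 2 * Real.exp (-(c * x)) * Real.exp (-(c * Real.exp (-(c * x)))) - 1) x := by
  have h := ((((hasDerivAt_psi c x).const_mul c).neg).exp).sub (hasDerivAt_id x)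
  simp only [Pi.neg_apply, Pi.sub_def, Pi.add_def, Pi.mul_def, id_eq] at h
  exact h.congr_deriv (by ring)

lemma hasDerivAt_Mc (c x : ℝ) :
    HasDerivAt (Mc c)
      (c ^ 2 * Real.exp (-(c * x)) * (Real.exp (-(c * Real.exp (-(c * x)))) - x)) x := by
  unfold Mc
  have h1 : HasDerivAt (fun y : ℝ => c * y) c x := by
    simpa using (hasDerivAt_id x).const_mul c
  have h := (((h1.mul (hasDerivAt_psi c x)).add (hasDerivAt_psi c x)).add
      ((((hasDerivAt_psi c x).const_mul c).neg).exp)).sub_const 1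
  simp only [Pi.neg_apply, Pi.sub_def, Pi.add_def, Pi.mul_def, id_eq] at h
  exact h.congr_deriv (by ring)

lemma diff_Mc (c : ℝ) : Differentiable ℝ (Mc c) :=
  fun x => (hasDerivAt_Mc c x).differentiableAt

/-- Tangent-line trick: `M y ≤ M (e^{-cy})` for every `y`. -/
lemma Mc_le_Mc_psi (c : ℝ) (hc : 0 < c) (y : ℝ) :
    Mc c y ≤ Mc c (Real.exp (-(c * y))) := by
  unfold Mc
  set b := Real.exp (-(c * y)) with hb
  set F := Real.exp (-(c * b)) with hF
  have hbpos : 0 < b := Real.exp_pos _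
  have hkey : Real.exp (-(c * F)) = b * Real.exp (c * y - c * F) := by
    rw [hb, ← Real.exp_add]
    congr 1
    ring
  have htan : (c * y - c * F) + 1 ≤ Real.exp (c * y - c * F) := Real.add_one_le_exp _
  have h2 := mul_le_mul_of_nonneg_left htan hbpos.le
  nlinarith [h2, hkey]

/-- Convexity of the region where `g' > 0`. -/
lemma deriv_pos_convex (c : ℝ) (hc : 0 < c) {r s r₂ : ℝ} (h1 : r < s) (h2 : s < r₂)
    (hr : 0 < c ^ 2 * Real.exp (-(c * r)) * Real.exp (-(c * Real.exp (-(c * r)))) - 1)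
    (hr₂ : 0 < c ^ 2 * Real.exp (-(c * r₂)) * Real.exp (-(c * Real.exp (-(c * r₂)))) - 1) :
    0 < c ^ 2 * Real.exp (-(c * s)) * Real.exp (-(c * Real.exp (-(c * s)))) - 1 := by
  set L := Real.log (c ^ 2) with hL
  have hexp : ∀ x : ℝ, c ^ 2 * Real.exp (-(c * x)) * Real.exp (-(c * Real.exp (-(c * x))))
      = Real.exp (L + -(c * x) + -(c * Real.exp (-(c * x)))) := by
    intro x
    rw [Real.exp_add, Real.exp_add, hL, Real.exp_log (by positivity)]
  have hGr : 0 < L + -(c * r) + -(c * Real.exp (-(c * r))) := by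
    rw [hexp r] at hr
    have : (1 : ℝ) < Real.exp (L + -(c * r) + -(c * Real.exp (-(c * r)))) := by linarith
    exact Real.one_lt_exp_iff.mp this
  have hGr₂ : 0 < L + -(c * r₂) + -(c * Real.exp (-(c * r₂))) := by
    rw [hexp r₂] at hr₂
    have : (1 : ℝ) < Real.exp (L + -(c * r₂) + -(c * Real.exp (-(c * r₂)))) := by linarith
    exact Real.one_lt_exp_iff.mp this
  set a : ℝ := (r₂ - s) / (r₂ - r) with ha'
  set b : ℝ := (s - r) / (r₂ - r) with hb'
  have hrr : (0:ℝ) < r₂ - r := by linarith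
  have ha : 0 < a := div_pos (by linarith) hrr
  have hb : 0 < b := div_pos (by linarith) hrr
  have hab : a + b = 1 := by
    rw [ha', hb']
    field_simp
    ring
  have hs : a * r + b * r₂ = s := by
    rw [ha', hb']
    field_simp
    ring
  have hconv := convexOn_exp.2 (Set.mem_univ (-(c * r))) (Set.mem_univ (-(c * r₂)))
      ha.le hb.le hab
  simp only [smul_eq_mul] at hconv
  have harg : a * -(c * r) + b * -(c * r₂) = -(c * s) := by rw [← hs]; ring
  rw [harg] at hconv
  have h3 : c * Real.exp (-(c * s)) ≤
      c * (a * Real.exp (-(c * r)) + b * Real.exp (-(c * r₂))) :=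
    mul_le_mul_of_nonneg_left hconv hc.le
  have h4 : a * L + b * L = L := by rw [← add_mul, hab, one_mul]
  have h5 : c * (a * r + b * r₂) = c * s := by rw [hs]
  have key : a * (L + -(c * r) + -(c * Real.exp (-(c * r)))) +
      b * (L + -(c * r₂) + -(c * Real.exp (-(c * r₂)))) ≤
      L + -(c * s) + -(c * Real.exp (-(c * s))) := by nlinarith [h3, h4, h5]
  have hGs : 0 < L + -(c * s) + -(c * Real.exp (-(c * s))) := by
    nlinarith [mul_pos ha hGr, mul_pos hb hGr₂, key]
  rw [hexp s]
  have := Real.one_lt_exp_iff.mpr hGs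
  linarith

/-- Key shape lemma: past the first fixed point and before the fixed point of `ψ`,
we have `f t ≤ t`. -/
lemma g_nonpos (c : ℝ) (hc : 0 < c) {x₀ t : ℝ}
    (hx₀ : Real.exp (-(c * Real.exp (-(c * x₀)))) = x₀)
    (h1 : x₀ < t) (h2 : t < Real.exp (-(c * t))) :
    Real.exp (-(c * Real.exp (-(c * t)))) ≤ t := by
  by_contra hcon
  push_neg at hcon
  have hgdiff : Differentiable ℝ (fun y : ℝ => Real.exp (-(c * Real.exp (-(c * y)))) - y) :=
    fun x => (hasDerivAt_g c x).differentiableAt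
  have hgcont := hgdiff.continuous
  have htu : t < Real.exp (-(c * t)) := h2
  have huy₀ : Real.exp (-(c * t)) < Real.exp (-(c * x₀)) := by
    apply Real.exp_lt_exp.mpr
    nlinarith
  -- MVT on [x₀, t]
  obtain ⟨r, hrmem, hr⟩ := exists_deriv_eq_slope _ h1 hgcont.continuousOn
    hgdiff.differentiableOn
  have hrpos : 0 < c ^ 2 * Real.exp (-(c * r)) * Real.exp (-(c * Real.exp (-(c * r)))) - 1 := by
    rw [← (hasDerivAt_g c r).deriv, hr, hx₀]
    apply div_pos (by linarith) (by linarith)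
  -- MVT on [t, exp(-(c*t))]
  obtain ⟨s, hsmem, hs⟩ := exists_deriv_eq_slope _ htu hgcont.continuousOn
    hgdiff.differentiableOn
  have hvalu : Real.exp (-(c * Real.exp (-(c * Real.exp (-(c * t)))))) -
      Real.exp (-(c * t)) < 0 := by
    have hlt : Real.exp (-(c * Real.exp (-(c * Real.exp (-(c * t)))))) <
        Real.exp (-(c * t)) := by
      apply Real.exp_lt_exp.mpr
      nlinarith
    linarith
  have hsneg : c ^ 2 * Real.exp (-(c * s)) * Real.exp (-(c * Real.exp (-(c * s)))) - 1 < 0 := by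
    rw [← (hasDerivAt_g c s).deriv, hs]
    apply div_neg_of_neg_of_pos (by nlinarith) (by linarith)
  -- MVT on [exp(-(c*t)), exp(-(c*x₀))]
  obtain ⟨r₂, hr₂mem, hr₂⟩ := exists_deriv_eq_slope _ huy₀ hgcont.continuousOn
    hgdiff.differentiableOn
  have hvaly₀ : Real.exp (-(c * Real.exp (-(c * Real.exp (-(c * x₀)))))) -
      Real.exp (-(c * x₀)) = 0 := by
    rw [hx₀]
    ring
  have hr₂pos : 0 < c ^ 2 * Real.exp (-(c * r₂)) * Real.exp (-(c * Real.exp (-(c * r₂)))) - 1 := by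
    rw [← (hasDerivAt_g c r₂).deriv, hr₂]
    apply div_pos (by nlinarith) (by linarith)
  have := deriv_pos_convex c hc (show r < s by
      rcases hrmem with ⟨_, hr2⟩; rcases hsmem with ⟨hs1, _⟩; linarith)
    (show s < r₂ by rcases hsmem with ⟨_, hs2⟩; rcases hr₂mem with ⟨hr₂1, _⟩; linarith)
    hrpos hr₂pos
  linarith

end Poisson19

open Poisson19

/-- For the Poisson(c) generating function `φ(x) = exp(c(x−1))`:
`φ''` is log-concave on `(0,1)`; the first local extremum
`x₀ = inf{x ∈ [0,1] : x̿ = x}` of `M` is a global maximum of `M` on `[0,1]`; and with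
`q` the smallest solution in `(0,1)` of `q = exp(−c·exp(−cq))`, the maximum value is
`q + e^{−cq} + cq·e^{−cq} − 1`. -/
theorem poisson_M_max (c : ℝ) (hc : 0 < c) :
    let φ : ℝ → ℝ := fun x => Real.exp (c * (x - 1))
    let M : ℝ → ℝ := fun x =>
      c * x * Real.exp (-(c * x)) + φ (1 - x) + φ (1 - Real.exp (-(c * x))) - 1
    let x₀ : ℝ := sInf {x ∈ Set.Icc (0 : ℝ) 1 | Real.exp (-(c * Real.exp (-(c * x)))) = x}
    let q : ℝ := sInf {x ∈ Set.Ioo (0 : ℝ) 1 | x = Real.exp (-(c * Real.exp (-(c * x))))}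
    ConcaveOn ℝ (Set.Ioo 0 1) (fun x => Real.log (deriv (deriv φ) x)) ∧
    (∀ y ∈ Set.Icc (0 : ℝ) 1, M y ≤ M x₀) ∧
    M x₀ = q + Real.exp (-(c * q)) + c * q * Real.exp (-(c * q)) - 1 := by
  intro φ M x₀ q
  -- Rewrite M in normalized form
  have hMc : M = Mc c := by
    funext y
    show c * y * Real.exp (-(c * y)) + Real.exp (c * ((1 - y) - 1)) +
        Real.exp (c * ((1 - Real.exp (-(c * y))) - 1)) - 1 = Mc c y
    unfold Mc
    rw [show c * ((1 - y) - 1) = -(c * y) by ring,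
        show c * ((1 - Real.exp (-(c * y))) - 1) = -(c * Real.exp (-(c * y))) by ring]
  -- Part 1: log-concavity of φ''
  have part1 : ConcaveOn ℝ (Set.Ioo 0 1) (fun x => Real.log (deriv (deriv φ) x)) := by
    have hφ' : deriv φ = fun x => c * Real.exp (c * (x - 1)) := by
      funext x
      have h : HasDerivAt φ (Real.exp (c * (x - 1)) * (c * 1)) x :=
        (((hasDerivAt_id x).sub_const 1).const_mul c).exp
      rw [h.deriv]; ring
    have hφ'' : deriv (deriv φ) = fun x => c ^ 2 * Real.exp (c * (x - 1)) := by
      rw [hφ']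
      funext x
      have h : HasDerivAt (fun x => c * Real.exp (c * (x - 1)))
          (c * (Real.exp (c * (x - 1)) * (c * 1))) x :=
        ((((hasDerivAt_id x).sub_const 1).const_mul c).exp).const_mul c
      rw [h.deriv]; ring
    rw [hφ'']
    have hlog : ∀ z : ℝ, Real.log (c ^ 2 * Real.exp (c * (z - 1))) =
        Real.log (c ^ 2) + (c * z - c) := by
      intro z
      rw [Real.log_mul (by positivity) (Real.exp_ne_zero _), Real.log_exp]; ring
    refine ⟨convex_Ioo 0 1, fun x hx y hy a b ha hb hab => ?_⟩
    simp only [smul_eq_mul, hlog]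
    apply le_of_eq
    linear_combination (Real.log (c ^ 2) - c) * hab
  -- Set-up for parts 2 and 3
  set S : Set ℝ := {x ∈ Set.Icc (0 : ℝ) 1 | Real.exp (-(c * Real.exp (-(c * x)))) = x}
    with hSdef
  have hx₀def : x₀ = sInf S := rfl
  set gf : ℝ → ℝ := fun y => Real.exp (-(c * Real.exp (-(c * y)))) - y with hgf
  have hgdiff : Differentiable ℝ gf := fun x => (hasDerivAt_g c x).differentiableAt
  have hgcont : Continuous gf := hgdiff.continuous
  have hg0 : 0 < gf 0 := by
    simp only [hgf]
    norm_num
    exact Real.exp_pos _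
  have hg1 : gf 1 < 0 := by
    simp only [hgf]
    have h1 : Real.exp (-(c * Real.exp (-(c * 1)))) < 1 :=
      Real.exp_lt_one_iff.mpr (by nlinarith [Real.exp_pos (-(c * 1))])
    linarith
  -- S is nonempty (IVT)
  have hSne : S.Nonempty := by
    have hsub := intermediate_value_Icc' (by norm_num : (0:ℝ) ≤ 1) hgcont.continuousOn
    have h0mem : (0:ℝ) ∈ Set.Icc (gf 1) (gf 0) := ⟨hg1.le, hg0.le⟩
    obtain ⟨u, humem, hueq⟩ := hsub h0mem
    exact ⟨u, humem, by simpa [hgf, sub_eq_zero] using hueq⟩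
  -- S is compact
  have hScomp : IsCompact S := by
    have hclosed : IsClosed {x : ℝ | Real.exp (-(c * Real.exp (-(c * x)))) = x} :=
      isClosed_eq (by fun_prop) continuous_id
    exact isCompact_Icc.inter_right hclosed
  have hx₀S : x₀ ∈ S := by rw [hx₀def]; exact hScomp.sInf_mem hSne
  obtain ⟨hx₀Icc, hx₀fix⟩ := hx₀S
  have hx₀pos : 0 < x₀ := by rw [← hx₀fix]; exact Real.exp_pos _
  have hx₀lt1 : x₀ < 1 := by
    rw [← hx₀fix]
    exact Real.exp_lt_one_iff.mpr (by nlinarith [Real.exp_pos (-(c * x₀))])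
  have hbdd : BddBelow S := ⟨0, fun u hu => hu.1.1⟩
  have hx₀min : ∀ u ∈ S, x₀ ≤ u := fun u hu => by rw [hx₀def]; exact csInf_le hbdd hu
  -- q = x₀
  have hqx₀ : q = x₀ := by
    have hsets : {x ∈ Set.Ioo (0 : ℝ) 1 | x = Real.exp (-(c * Real.exp (-(c * x))))} = S := by
      ext x
      constructor
      · rintro ⟨hxIoo, hxeq⟩
        exact ⟨⟨hxIoo.1.le, hxIoo.2.le⟩, hxeq.symm⟩
      · rintro ⟨hxIcc, hxeq⟩
        have hxpos : 0 < x := by rw [← hxeq]; exact Real.exp_pos _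
        have hxlt1 : x < 1 := by
          rw [← hxeq]
          exact Real.exp_lt_one_iff.mpr (by nlinarith [Real.exp_pos (-(c * x))])
        exact ⟨⟨hxpos, hxlt1⟩, hxeq.symm⟩
    show sInf {x ∈ Set.Ioo (0 : ℝ) 1 | x = Real.exp (-(c * Real.exp (-(c * x))))} = x₀
    rw [hsets, hx₀def]
  -- g is positive on [0, x₀)
  have hgpos : ∀ y : ℝ, 0 ≤ y → y < x₀ → 0 < gf y := by
    intro y hy0 hy
    by_contra hle
    push_neg at hle
    have hsub := intermediate_value_Icc' hy0 hgcont.continuousOn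
    have h0mem : (0:ℝ) ∈ Set.Icc (gf y) (gf 0) := ⟨hle, hg0.le⟩
    obtain ⟨u, humem, hueq⟩ := hsub h0mem
    have huS : u ∈ S := by
      refine ⟨⟨humem.1, by linarith [humem.2, hx₀lt1]⟩, ?_⟩
      simpa [hgf, sub_eq_zero] using hueq
    have := hx₀min u huS
    linarith [humem.2]
  -- M is monotone on [0, x₀]
  have hmonoOn : MonotoneOn (Mc c) (Set.Icc 0 x₀) := by
    apply monotoneOn_of_deriv_nonneg (convex_Icc 0 x₀)
      (diff_Mc c).continuous.continuousOn (diff_Mc c).differentiableOn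
    intro t ht
    rw [interior_Icc] at ht
    rw [(hasDerivAt_Mc c t).deriv]
    have hgt := hgpos t ht.1.le ht.2
    simp only [hgf] at hgt
    have h1 : (0:ℝ) < c ^ 2 * Real.exp (-(c * t)) := by positivity
    nlinarith
  have hmono : ∀ y, 0 ≤ y → y ≤ x₀ → Mc c y ≤ Mc c x₀ :=
    fun y hy0 hy1 => hmonoOn ⟨hy0, hy1⟩ ⟨hx₀pos.le, le_refl _⟩ hy1
  -- M is antitone on [x₀, z] for z ≤ ψ z
  have hanti : ∀ z, x₀ ≤ z → z ≤ Real.exp (-(c * z)) → Mc c z ≤ Mc c x₀ := by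
    intro z hz1 hz2
    have hantiOn : AntitoneOn (Mc c) (Set.Icc x₀ z) := by
      apply antitoneOn_of_deriv_nonpos (convex_Icc x₀ z)
        (diff_Mc c).continuous.continuousOn (diff_Mc c).differentiableOn
      intro t ht
      rw [interior_Icc] at ht
      rw [(hasDerivAt_Mc c t).deriv]
      have htpsi : t < Real.exp (-(c * t)) := by
        have : Real.exp (-(c * z)) ≤ Real.exp (-(c * t)) := by
          apply Real.exp_le_exp.mpr
          nlinarith [ht.2]
        linarith [ht.2]
      have hfle := g_nonpos c hc hx₀fix ht.1 htpsi
      have h1 : (0:ℝ) < c ^ 2 * Real.exp (-(c * t)) := by positivity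
      nlinarith
    exact hantiOn ⟨le_refl _, hz1⟩ ⟨hz1, le_refl _⟩ hz1
  -- Part 2
  have part2 : ∀ y ∈ Set.Icc (0 : ℝ) 1, M y ≤ M x₀ := by
    intro y hy
    rw [hMc]
    rcases le_or_gt y x₀ with h | h
    · exact hmono y hy.1 h
    · rcases le_or_gt (Real.exp (-(c * y))) x₀ with h2 | h2
      · exact (Mc_le_Mc_psi c hc y).trans (hmono _ (Real.exp_pos _).le h2)
      · rcases le_or_gt y (Real.exp (-(c * y))) with h3 | h3
        · exact hanti y h.le h3
        · have h4 : Real.exp (-(c * y)) ≤ Real.exp (-(c * Real.exp (-(c * y)))) := by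
            apply Real.exp_le_exp.mpr
            nlinarith
          exact (Mc_le_Mc_psi c hc y).trans (hanti _ h2.le h4)
  -- Part 3
  have part3 : M x₀ = q + Real.exp (-(c * q)) + c * q * Real.exp (-(c * q)) - 1 := by
    rw [hMc, hqx₀]
    unfold Mc
    rw [hx₀fix]
    ring
  exact ⟨part1, part2, part3⟩
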